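/- Let p ∈ [−1, 0] and define f(s) = (e^{sp} − 1)/(e^s − 1) for s > 0 (extended continuously by f(0) = p). Then the third derivative of f satisfies f'''(s) ≥ 0 for all s > 0. -/

import Mathlib

open Real

lemma nonneg_from_deriv {F F' : ℝ → ℝ} (hd : ∀ x, HasDerivAt F (F' x) x)
    (h0 : F 0 = 0) (h' : ∀ x, 0 ≤ x → 0 ≤ F' x) : ∀ x, 0 ≤ x → 0 ≤ F x := by
  intro x hx
  have hdiff : Differentiable ℝ F := fun y => (hd y).differentiableAt
  have hmono : MonotoneOn F (Set.Ici 0) := by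
    apply monotoneOn_of_deriv_nonneg (convex_Ici 0) hdiff.continuous.continuousOn
      hdiff.differentiableOn
    intro y hy
    rw [interior_Ici] at hy
    rw [(hd y).deriv]
    exact h' y (le_of_lt hy)
  have := hmono Set.self_mem_Ici (Set.mem_Ici.2 hx) hx
  linarith [h0 ▸ this]

lemma pade (s : ℝ) (hs : 0 ≤ s) :
    0 ≤ s * (Real.exp s ^ 2 + 4 * Real.exp s + 1) - 3 * (Real.exp s ^ 2 - 1) := by
  -- chain of three monotonicity arguments
  have hchi' : ∀ x : ℝ, 0 ≤ x * Real.exp x - Real.exp x + 1 := by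
    intro x
    have h := Real.add_one_le_exp (-x)
    have h2 := mul_le_mul_of_nonneg_right h (Real.exp_pos x).le
    have h3 : Real.exp (-x) * Real.exp x = 1 := by
      rw [← Real.exp_add]; simp
    nlinarith [h2, h3]
  have hchi : ∀ x : ℝ, 0 ≤ x → 0 ≤ x * (Real.exp x + 1) - 2 * Real.exp x + 2 := by
    apply nonneg_from_deriv (F' := fun x => x * Real.exp x - Real.exp x + 1)
    · intro x
      have h := Real.hasDerivAt_exp x
      have H := (((hasDerivAt_id x).mul (h.add_const 1)).sub (h.const_mul 2)).add_const 2
      simp only [id_eq] at H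
      refine H.congr_deriv ?_
      ring
    · simp
    · intro x _; exact hchi' x
  have hpsi1 : ∀ x : ℝ, 0 ≤ x →
      0 ≤ x * (2 * Real.exp x ^ 2 + 4 * Real.exp x) - 5 * Real.exp x ^ 2 + 4 * Real.exp x + 1 := by
    apply nonneg_from_deriv
      (F' := fun x => 4 * Real.exp x * (x * (Real.exp x + 1) - 2 * Real.exp x + 2))
    · intro x
      have h := Real.hasDerivAt_exp x
      have H := ((((hasDerivAt_id x).mul (((h.pow 2).const_mul 2).add (h.const_mul 4))).sub
        ((h.pow 2).const_mul 5)).add (h.const_mul 4)).add_const 1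
      simp only [id_eq] at H
      refine H.congr_deriv ?_
      simp only [Pi.add_apply, Pi.mul_apply, Pi.sub_apply, Pi.pow_apply, Pi.div_apply]
      push_cast
      ring
    · norm_num
    · intro x hx
      have := hchi x hx
      nlinarith [Real.exp_pos x]
  have hpsi : ∀ x : ℝ, 0 ≤ x →
      0 ≤ x * (Real.exp x ^ 2 + 4 * Real.exp x + 1) - 3 * Real.exp x ^ 2 + 3 := by
    apply nonneg_from_deriv
      (F' := fun x => x * (2 * Real.exp x ^ 2 + 4 * Real.exp x) - 5 * Real.exp x ^ 2
        + 4 * Real.exp x + 1)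
    · intro x
      have h := Real.hasDerivAt_exp x
      have H := (((hasDerivAt_id x).mul (((h.pow 2).add (h.const_mul 4)).add_const 1)).sub
        ((h.pow 2).const_mul 3)).add_const 3
      simp only [id_eq] at H
      refine H.congr_deriv ?_
      simp only [Pi.add_apply, Pi.mul_apply, Pi.sub_apply, Pi.pow_apply, Pi.div_apply]
      push_cast
      ring
    · simp
    · exact hpsi1
  have := hpsi s hs
  linarith

lemma cube_le_exp (x : ℝ) (hx : 0 ≤ x) : 1 + x + x ^ 2 / 2 + x ^ 3 / 6 ≤ Real.exp x := by
  have h := Real.sum_le_exp_of_nonneg hx 4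
  simp [Finset.sum_range_succ, Nat.factorial] at h
  linarith

noncomputable def D1 (p x : ℝ) : ℝ :=
  (p * Real.exp (x*p) * (Real.exp x - 1) - (Real.exp (x*p) - 1) * Real.exp x) / (Real.exp x - 1)^2

noncomputable def D2 (p x : ℝ) : ℝ :=
  (p^2 * Real.exp (x*p) * (Real.exp x - 1)^2 - 2*p*Real.exp (x*p)*Real.exp x*(Real.exp x - 1)
    + (Real.exp (x*p) - 1)*Real.exp x*(Real.exp x + 1)) / (Real.exp x - 1)^3

noncomputable def D3 (p x : ℝ) : ℝ :=
  (p^3*Real.exp (x*p)*(Real.exp x-1)^3 - 3*p^2*Real.exp (x*p)*Real.exp x*(Real.exp x-1)^2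
    + 3*p*Real.exp (x*p)*Real.exp x*(Real.exp x-1)*(Real.exp x+1)
    - (Real.exp (x*p)-1)*Real.exp x*(Real.exp x^2+4*Real.exp x+1)) / (Real.exp x-1)^4

lemma exp_one_lt {x : ℝ} (hx : 0 < x) : (1:ℝ) < Real.exp x := by
  rw [← Real.exp_zero]; exact Real.exp_lt_exp.mpr hx

lemma hQd (p x : ℝ) : HasDerivAt (fun y => Real.exp (y*p)) (Real.exp (x*p) * p) x := by
  simpa using ((hasDerivAt_id x).mul_const p).exp

lemma hD1 (p : ℝ) {x : ℝ} (hx : 0 < x) :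
    HasDerivAt (fun y => (Real.exp (y*p) - 1)/(Real.exp y - 1)) (D1 p x) x := by
  have hne : Real.exp x - 1 ≠ 0 := ne_of_gt (by linarith [exp_one_lt hx])
  have hE := Real.hasDerivAt_exp x
  have H := ((hQd p x).sub_const 1).div (hE.sub_const 1) hne
  unfold D1
  refine H.congr_deriv ?_
  ring

lemma hD2 (p : ℝ) {x : ℝ} (hx : 0 < x) : HasDerivAt (D1 p) (D2 p x) x := by
  have hne : Real.exp x - 1 ≠ 0 := ne_of_gt (by linarith [exp_one_lt hx])
  have hE := Real.hasDerivAt_exp x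
  have hQ := hQd p x
  have hN := ((hQ.const_mul p).mul (hE.sub_const 1)).sub ((hQ.sub_const 1).mul hE)
  have H := hN.div ((hE.sub_const 1).pow 2) (pow_ne_zero 2 hne)
  unfold D1 D2
  refine H.congr_deriv ?_
  simp only [Pi.add_apply, Pi.mul_apply, Pi.sub_apply, Pi.pow_apply, Pi.div_apply]
  push_cast
  field_simp
  ring

lemma hD3 (p : ℝ) {x : ℝ} (hx : 0 < x) : HasDerivAt (D2 p) (D3 p x) x := by
  have hne : Real.exp x - 1 ≠ 0 := ne_of_gt (by linarith [exp_one_lt hx])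
  have hE := Real.hasDerivAt_exp x
  have hQ := hQd p x
  have hN := (((hQ.const_mul (p^2)).mul ((hE.sub_const 1).pow 2)).sub
      (((hQ.const_mul (2*p)).mul hE).mul (hE.sub_const 1))).add
      (((hQ.sub_const 1).mul hE).mul (hE.add_const 1))
  have H := hN.div ((hE.sub_const 1).pow 3) (pow_ne_zero 3 hne)
  unfold D2 D3
  refine H.congr_deriv ?_
  simp only [Pi.add_apply, Pi.mul_apply, Pi.sub_apply, Pi.pow_apply, Pi.div_apply]
  push_cast
  field_simp
  ring

theorem third_deriv_nonneg (p : ℝ) (hp : p ∈ Set.Icc (-1 : ℝ) 0)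
    (f : ℝ → ℝ) (hf : ∀ s, f s = (Real.exp (s * p) - 1) / (Real.exp s - 1)) :
    ∀ s > (0 : ℝ), 0 ≤ iteratedDeriv 3 f s := by
  intro s hs
  have hfe : f = fun x => (Real.exp (x * p) - 1) / (Real.exp x - 1) := funext hf
  have E1 : ∀ x ∈ Set.Ioi (0:ℝ), deriv f x = D1 p x := by
    intro x hx
    rw [hfe]
    exact (hD1 p hx).deriv
  have E2 : ∀ x ∈ Set.Ioi (0:ℝ), deriv (deriv f) x = D2 p x := by
    intro x hx
    have hev : deriv f =ᶠ[nhds x] D1 p := Filter.eventuallyEq_of_mem (isOpen_Ioi.mem_nhds hx) E1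
    rw [hev.deriv_eq]
    exact (hD2 p hx).deriv
  have E3 : iteratedDeriv 3 f s = D3 p s := by
    have h3 : iteratedDeriv 3 f = deriv (deriv (deriv f)) := by
      rw [show (3:ℕ) = 2+1 from rfl, iteratedDeriv_succ, show (2:ℕ) = 1+1 from rfl,
        iteratedDeriv_succ, iteratedDeriv_one]
    rw [h3]
    have hev : deriv (deriv f) =ᶠ[nhds s] D2 p :=
      Filter.eventuallyEq_of_mem (isOpen_Ioi.mem_nhds hs) E2
    rw [hev.deriv_eq]
    exact (hD3 p hs).deriv
  rw [E3]
  unfold D3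
  set u := Real.exp s with hu_def
  set q := Real.exp (s*p) with hq_def
  have hu1 : 1 < u := exp_one_lt hs
  have hu0 : (0:ℝ) < u := by linarith
  have hq0 : 0 < q := Real.exp_pos _
  have hA : (0:ℝ) < u^2 + 4*u + 1 := by nlinarith
  apply div_nonneg _ (by positivity)
  -- key inequalities
  have k1 : 0 ≤ s*(u^2+4*u+1) - 3*(u^2-1) := pade s hs.le
  have k2 : 0 ≤ s^2*(u^2+4*u+1) - 6*(u-1)^2 := by
    have h1 : 0 ≤ (s*(u^2+4*u+1) - 3*(u^2-1)) * (s*(u^2+4*u+1) + 3*(u^2-1)) :=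
      mul_nonneg k1 (by nlinarith [mul_nonneg hs.le hA.le])
    have key : (u^2+4*u+1) * (s^2*(u^2+4*u+1) - 6*(u-1)^2) =
        (s*(u^2+4*u+1) - 3*(u^2-1)) * (s*(u^2+4*u+1) + 3*(u^2-1)) + 3*(u-1)^4 := by ring
    nlinarith [h1, hA, key, pow_nonneg (show (0:ℝ) ≤ u - 1 by linarith) 4]
  have k3 : 0 ≤ s^3*u*(u^2+4*u+1) - 6*(u-1)^3 := by
    have hcube3 : (3*(u^2-1))^3 ≤ (s*(u^2+4*u+1))^3 :=
      pow_le_pow_left₀ (by nlinarith) (by linarith) 3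
    have h4 : 0 ≤ 3*(u-1)^4*(7*u^3+18*u^2+9*u+2) :=
      mul_nonneg (mul_nonneg (by norm_num)
        (pow_nonneg (show (0:ℝ) ≤ u - 1 by linarith) 4)) (by nlinarith)
    have key : (u^2+4*u+1)^2 * (s^3*u*(u^2+4*u+1) - 6*(u-1)^3) =
        u*((s*(u^2+4*u+1))^3 - (3*(u^2-1))^3) + 3*(u-1)^4*(7*u^3+18*u^2+9*u+2) := by ring
    nlinarith [hcube3, h4, key, mul_le_mul_of_nonneg_left hcube3 hu0.le,
      pow_pos hA 2]
  -- exponential bound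
  set b := Real.exp (-(s*p)) with hb_def
  have hqb : q * b = 1 := by
    rw [hq_def, hb_def, ← Real.exp_add, show s*p + -(s*p) = 0 by ring, Real.exp_zero]
  have hsp : 0 ≤ -(s*p) := by nlinarith [hp.2, hs.le]
  have hcub : 1 + -(s*p) + (-(s*p))^2/2 + (-(s*p))^3/6 ≤ b := cube_le_exp _ hsp
  -- assemble
  have P0 : 0 ≤ (b - (1 + -(s*p) + (-(s*p))^2/2 + (-(s*p))^3/6)) * (u*(u^2+4*u+1)) :=
    mul_nonneg (by linarith) (mul_nonneg hu0.le hA.le)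
  have P1 : 0 ≤ (-p) * (u * (s*(u^2+4*u+1) - 3*(u^2-1))) :=
    mul_nonneg (neg_nonneg.2 hp.2) (mul_nonneg hu0.le k1)
  have P2 : 0 ≤ p^2 * (u * (s^2*(u^2+4*u+1) - 6*(u-1)^2)) :=
    mul_nonneg (sq_nonneg p) (mul_nonneg hu0.le k2)
  have P3 : 0 ≤ (-p)^3 * (s^3*u*(u^2+4*u+1) - 6*(u-1)^3) :=
    mul_nonneg (pow_nonneg (neg_nonneg.2 hp.2) 3) k3
  have hM : 0 ≤ (b-1)*(u*(u^2+4*u+1)) + p^3*(u-1)^3 - 3*p^2*u*(u-1)^2 + 3*p*u*(u^2-1) := by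
    nlinarith [P0, P1, P2, P3]
  have hqM := mul_nonneg hq0.le hM
  have h0 : p^3*q*(u-1)^3 - 3*p^2*q*u*(u-1)^2 + 3*p*q*u*(u-1)*(u+1) - (q-1)*u*(u^2+4*u+1)
      = q * ((b-1)*(u*(u^2+4*u+1)) + p^3*(u-1)^3 - 3*p^2*u*(u-1)^2 + 3*p*u*(u^2-1)) := by
    linear_combination (-(u*(u^2+4*u+1))) * hqb
  rw [h0]
  exact hqM
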